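/- Let U be a unitary on n qubits implemented by a depth-d QAC circuit. Then there exists a depth-7d 2D-QAC circuit V on the (n+1)×n lattice of qubits, with the first row holding the n input qubits and the remaining n rows holding n² ancilla qubits, such that for every n-qubit state |φ⟩: V(|φ⟩ ⊗ |1^{n²}⟩) = (U|φ⟩) ⊗ |1^{n²}⟩. -/

import Mathlib

/-- A layer of arbitrary single-qubit unitaries on qubits indexed by `ι`,
written as a matrix in the computational basis (indexed by `ι → Bool`):
the entrywise tensor product of single-qubit unitaries. -/
def IsSingleQubitLayer {ι : Type*} [Fintype ι] [DecidableEq ι]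
    (L : Matrix (ι → Bool) (ι → Bool) ℂ) : Prop :=
  ∃ u : ι → Matrix Bool Bool ℂ,
    (∀ i, u i ∈ Matrix.unitaryGroup Bool ℂ) ∧
    ∀ x y, L x y = ∏ i, u i (x i) (y i)

/-- A layer of CZ gates acting on pairwise disjoint supports, each support
required to satisfy the predicate `P`.  The CZ gate on a set `T` maps a basis
state `|x⟩` to `−|x⟩` if `x` is all ones on `T` and fixes it otherwise; a layer
is the corresponding diagonal matrix. -/
def IsCZLayer {ι : Type*} [Fintype ι] [DecidableEq ι] (P : Finset ι → Prop)
    (M : Matrix (ι → Bool) (ι → Bool) ℂ) : Prop :=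
  ∃ 𝒯 : Finset (Finset ι),
    (∀ T ∈ 𝒯, P T) ∧
    ((𝒯 : Set (Finset ι)).Pairwise fun T T' => Disjoint T T') ∧
    ∀ x y, M x y =
      if x = y then ∏ T ∈ 𝒯, (if ∀ i ∈ T, x i = true then (-1 : ℂ) else 1)
      else 0

/-- A depth-`d` QAC circuit whose CZ-gate supports are constrained by `P`:
`C = L_d · M_d ⋯ L_1 · M_1 · L_0` with `L_t` layers of single-qubit unitaries
and `M_t` layers of CZ gates on pairwise disjoint supports satisfying `P`. -/
def IsQACOn {ι : Type*} [Fintype ι] [DecidableEq ι] (P : Finset ι → Prop) :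
    ℕ → Matrix (ι → Bool) (ι → Bool) ℂ → Prop
  | 0, C => IsSingleQubitLayer C
  | d + 1, C => ∃ L M C', IsSingleQubitLayer L ∧ IsCZLayer P M ∧
      IsQACOn P d C' ∧ C = L * M * C'

/-- A contiguous interval of qubits on the line `Fin m`. -/
def IsInterval1D {m : ℕ} (T : Finset (Fin m)) : Prop :=
  ∀ a b c : Fin m, a ∈ T → c ∈ T → a ≤ b → b ≤ c → b ∈ T

/-- A depth-`d` 1D-QAC circuit on `m` qubits arranged on a line: every CZ gate
acts on a contiguous interval of qubits. -/
def Is1DQAC {m : ℕ} (d : ℕ) (C : Matrix (Fin m → Bool) (Fin m → Bool) ℂ) :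
    Prop :=
  IsQACOn IsInterval1D d C

/-- A depth-`d` QAC circuit on qubits indexed by `ι` with all-to-all
connectivity: the CZ gates may act on arbitrary subsets of qubits. -/
def IsQAC {ι : Type*} [Fintype ι] [DecidableEq ι] (d : ℕ)
    (C : Matrix (ι → Bool) (ι → Bool) ℂ) : Prop :=
  IsQACOn (fun _ => True) d C

/-- A contiguous interval of qubits lying within a single row or a single
column of the `w × n` lattice. -/
def IsRowColInterval (w n : ℕ) (T : Finset (Fin w × Fin n)) : Prop :=
  (∃ (i : Fin w) (a b : Fin n), T = {i} ×ˢ Finset.Icc a b) ∨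
  (∃ (j : Fin n) (a b : Fin w), T = Finset.Icc a b ×ˢ {j})

/-- A depth-`d` 2D-QAC circuit on a `w × n` lattice of qubits: every CZ gate
acts on a contiguous interval within a single row or column. -/
def Is2DQAC (w n d : ℕ)
    (C : Matrix (Fin w × Fin n → Bool) (Fin w × Fin n → Bool) ℂ) : Prop :=
  IsQACOn (IsRowColInterval w n) d C

/-! ### Generic machinery -/

open Finset

lemma prodIte {α : Type*} (s : Finset α) (P : α → Prop) [DecidablePred P] (f : α → ℂ) :
    (∏ a ∈ s, if P a then f a else 0) = if ∀ a ∈ s, P a then ∏ a ∈ s, f a else 0 := by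
  by_cases h : ∀ a ∈ s, P a
  · rw [if_pos h]; exact Finset.prod_congr rfl fun a ha => if_pos (h a ha)
  · rw [if_neg h]
    push_neg at h
    obtain ⟨a, ha, hPa⟩ := h
    exact Finset.prod_eq_zero ha (if_neg hPa)

lemma sum_delta_pi {α : Type*} [Fintype α] [DecidableEq α] (b : α → Bool)
    (X : (α → Bool) → ℂ) :
    (∑ t : α → Bool, if ∀ a, b a = t a then X t else 0) = X b := by
  have h : ∀ t : α → Bool, (∀ a, b a = t a) ↔ b = t := fun t => funext_iff.symm
  simp only [h]
  simp

def Lay {ι : Type*} [Fintype ι] (u : ι → Matrix Bool Bool ℂ) :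
    Matrix (ι → Bool) (ι → Bool) ℂ := Matrix.of fun z y => ∏ i, u i (z i) (y i)

@[simp] lemma Lay_apply {ι : Type*} [Fintype ι] (u : ι → Matrix Bool Bool ℂ)
    (z y : ι → Bool) : Lay u z y = ∏ i, u i (z i) (y i) := rfl

lemma layMul {ι : Type*} [Fintype ι] [DecidableEq ι] (u v : ι → Matrix Bool Bool ℂ) :
    Lay u * Lay v = Lay (fun i => u i * v i) := by
  apply Matrix.ext; intro z y
  rw [Matrix.mul_apply]
  calc ∑ w : ι → Bool, Lay u z w * Lay v w y
      = ∑ w : ι → Bool, ∏ i, (u i (z i) (w i) * v i (w i) (y i)) := by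
        refine Finset.sum_congr rfl fun w _ => ?_
        rw [Lay_apply, Lay_apply, Finset.prod_mul_distrib]
    _ = ∏ i, ∑ b, (u i (z i) b * v i b (y i)) := by
        rw [Finset.prod_univ_sum, Fintype.piFinset_univ]
    _ = Lay (fun i => u i * v i) z y := by
        rw [Lay_apply]
        exact Finset.prod_congr rfl fun i _ => (Matrix.mul_apply).symm

lemma layOne {ι : Type*} [Fintype ι] [DecidableEq ι] :
    Lay (fun _ : ι => (1 : Matrix Bool Bool ℂ)) = 1 := by
  apply Matrix.ext; intro z y
  rw [Lay_apply, Matrix.one_apply]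
  rw [show (∏ i : ι, (1 : Matrix Bool Bool ℂ) (z i) (y i))
      = ∏ i : ι, if z i = y i then (1:ℂ) else 0 from
    Finset.prod_congr rfl fun i _ => Matrix.one_apply, prodIte]
  simp [funext_iff]

lemma lay_single {ι : Type*} [Fintype ι] [DecidableEq ι] (u : ι → Matrix Bool Bool ℂ)
    (hu : ∀ i, u i ∈ Matrix.unitaryGroup Bool ℂ) : IsSingleQubitLayer (Lay u) :=
  ⟨u, hu, fun _ _ => rfl⟩

lemma diag_mulVec {β : Type*} [Fintype β] [DecidableEq β] (w : β → ℂ) (v : β → ℂ) :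
    (Matrix.of fun x y => if x = y then w x else 0).mulVec v = fun x => w x * v x := by
  funext x
  simp only [Matrix.mulVec, dotProduct, Matrix.of_apply, ite_mul, zero_mul]
  simp

lemma czLayer_one {ι : Type*} [Fintype ι] [DecidableEq ι] (P : Finset ι → Prop) :
    IsCZLayer P (1 : Matrix (ι → Bool) (ι → Bool) ℂ) := by
  refine ⟨∅, by simp, by simp, fun x y => ?_⟩
  simp [Matrix.one_apply]

lemma singleLayer_one {ι : Type*} [Fintype ι] [DecidableEq ι] :
    IsSingleQubitLayer (1 : Matrix (ι → Bool) (ι → Bool) ℂ) := by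
  rw [← layOne]
  exact lay_single _ fun _ => Submonoid.one_mem _

lemma qac_cons {ι : Type*} [Fintype ι] [DecidableEq ι] {P : Finset ι → Prop} {d : ℕ}
    {L M C : Matrix (ι → Bool) (ι → Bool) ℂ}
    (h1 : IsSingleQubitLayer L) (h2 : IsCZLayer P M) (h3 : IsQACOn P d C) :
    IsQACOn P (d+1) (L * M * C) :=
  ⟨L, M, C, h1, h2, h3, rfl⟩

lemma qac_pad {ι : Type*} [Fintype ι] [DecidableEq ι] {P : Finset ι → Prop} {d : ℕ}
    {C : Matrix (ι → Bool) (ι → Bool) ℂ} (h : IsQACOn P d C) : IsQACOn P (d+1) C := by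
  have := qac_cons singleLayer_one (czLayer_one P) h
  rwa [one_mul, one_mul] at this

section withn
variable {n : ℕ}

def colE (n : ℕ) : ((Fin (n+1) × Fin n) → Bool) ≃ (Fin n → Fin (n+1) → Bool) where
  toFun z j i := z (i, j)
  invFun c p := c p.2 p.1
  left_inv z := rfl
  right_inv c := rfl

lemma key (f : Fin n → (Fin (n+1) → Bool) → ℂ) (ψ : (Fin n → Bool) → ℂ) :
    ∑ y : Fin (n+1) × Fin n → Bool,
      (∏ j, f j (fun i => y (i, j))) * ψ (fun j => y (0, j))
    = ∑ t : Fin n → Bool, ψ t * ∏ j, ∑ c : Fin (n+1) → Bool,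
        (if c 0 = t j then f j c else 0) := by
  have step1 : ∀ t : Fin n → Bool,
      (∏ j, ∑ c : Fin (n+1) → Bool, (if c 0 = t j then f j c else 0))
      = ∑ c : Fin n → (Fin (n+1) → Bool),
          if ∀ j, c j 0 = t j then ∏ j, f j (c j) else 0 := by
    intro t
    rw [Finset.prod_univ_sum, Fintype.piFinset_univ]
    exact Finset.sum_congr rfl fun c _ =>
      (prodIte univ (fun j => c j 0 = t j) (fun j => f j (c j))).trans (by simp)
  calc ∑ y : Fin (n+1) × Fin n → Bool,
        (∏ j, f j (fun i => y (i, j))) * ψ (fun j => y (0, j))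
      = ∑ c : Fin n → (Fin (n+1) → Bool), (∏ j, f j (c j)) * ψ (fun j => c j 0) := by
        apply Fintype.sum_equiv (colE n)
        intro y; rfl
    _ = ∑ t : Fin n → Bool, ψ t * ∏ j, ∑ c : Fin (n+1) → Bool,
          (if c 0 = t j then f j c else 0) := by
        simp only [step1, Finset.mul_sum]
        rw [Finset.sum_comm]
        refine Finset.sum_congr rfl fun c _ => ?_
        have h1 : ∀ t : Fin n → Bool,
            (ψ t * if ∀ j, c j 0 = t j then ∏ j, f j (c j) else 0)
            = (if ∀ j, c j 0 = t j then ψ t * ∏ j, f j (c j) else 0) := by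
          intro t; by_cases h : ∀ j, c j 0 = t j <;> simp [h]
        simp only [h1]
        have hiff : ∀ x : Fin n → Bool, (∀ j, c j 0 = x j) ↔ ((fun j => c j 0) = x) :=
          fun x => funext_iff.symm
        simp only [hiff, Finset.sum_ite_eq, Finset.mem_univ, if_true]
        exact mul_comm _ _

end withn

lemma colcollapse {m : ℕ} (s : Fin m) (A : Matrix Bool Bool ℂ) (d : Fin m → Bool)
    (X : (Fin m → Bool) → ℂ) :
    ∑ c : Fin m → Bool, (∏ i, (if i = s then A else 1) (d i) (c i)) * X c
    = ∑ b : Bool, A (d s) b * X (Function.update d s b) := by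
  have hsummand : ∀ c : Fin m → Bool,
      (∏ i, (if i = s then A else 1) (d i) (c i)) * X c
      = ∑ b : Bool, if c = Function.update d s b then A (d s) b * X c else 0 := by
    intro c
    have hprod : (∏ i, (if i = s then A else 1) (d i) (c i))
        = A (d s) (c s) * if ∀ i ∈ univ.erase s, d i = c i then (1:ℂ) else 0 := by
      rw [← Finset.mul_prod_erase univ _ (Finset.mem_univ s), if_pos rfl]
      congr 1
      rw [show (∏ i ∈ univ.erase s, (if i = s then A else 1) (d i) (c i))
          = ∏ i ∈ univ.erase s, if d i = c i then (1:ℂ) else 0 from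
        Finset.prod_congr rfl fun i hi => by
          rw [if_neg (Finset.mem_erase.mp hi).1, Matrix.one_apply], prodIte]
      simp
    rw [hprod]
    by_cases h : ∀ i ∈ univ.erase s, d i = c i
    · have hc : c = Function.update d s (c s) := by
        funext i
        by_cases hi : i = s
        · subst hi; rw [Function.update_self]
        · rw [Function.update_of_ne hi]
          exact (h i (Finset.mem_erase.mpr ⟨hi, Finset.mem_univ i⟩)).symm
      rw [if_pos h, mul_one]
      rw [Finset.sum_eq_single (c s)]
      · rw [if_pos hc]
      · intro b _ hb
        rw [if_neg]
        intro hcontra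
        apply hb
        rw [hcontra, Function.update_self]
      · simp
    · rw [if_neg h, mul_zero, zero_mul]
      symm
      refine Finset.sum_eq_zero fun b _ => ?_
      rw [if_neg]
      intro hcontra
      apply h
      intro i hi
      rw [hcontra, Function.update_of_ne (Finset.mem_erase.mp hi).1]
  rw [Finset.sum_congr rfl fun c _ => hsummand c, Finset.sum_comm]
  refine Finset.sum_congr rfl fun b _ => ?_
  rw [Finset.sum_ite_eq' univ (Function.update d s b)
    (fun c => A (d s) b * X c), if_pos (Finset.mem_univ _)]

lemma pull {n : ℕ} (ψ : (Fin n → Bool) → ℂ) (b : Fin n → Bool) (g : Fin n → ℂ) :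
    ∑ t : Fin n → Bool, ψ t * ∏ j, (if b j = t j then g j else 0)
    = ψ b * ∏ j, g j := by
  have h1 : ∀ t : Fin n → Bool,
      ψ t * ∏ j, (if b j = t j then g j else 0)
      = if ∀ j, b j = t j then ψ t * ∏ j, g j else 0 := by
    intro t
    rw [prodIte]
    by_cases h : ∀ j, b j = t j <;> simp [h]
  rw [Finset.sum_congr rfl fun t _ => h1 t]
  exact (Finset.sum_congr rfl fun t _ => by congr 1).trans
    (sum_delta_pi b (fun t => ψ t * ∏ j, g j))

lemma stepsite {n : ℕ} (s : Fin n → Fin (n+1)) (hs : ∀ j, s j ≠ 0)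
    (A : Fin n → Matrix Bool Bool ℂ)
    (G : Fin n → (Fin (n+1) → Bool) → ℂ) (ψ : (Fin n → Bool) → ℂ) :
    (Lay (fun p : Fin (n+1) × Fin n => if p.1 = s p.2 then A p.2 else 1)).mulVec
      (fun z => ψ (fun j => z (0, j)) * ∏ j, G j (fun i => z (i, j)))
    = fun z => ψ (fun j => z (0, j)) *
        ∏ j, ∑ b, A j (z (s j, j)) b * G j (Function.update (fun i => z (i, j)) (s j) b) := by
  funext z
  rw [Matrix.mulVec]
  have hexp : ∀ y : Fin (n+1) × Fin n → Bool,
      Lay (fun p : Fin (n+1) × Fin n => if p.1 = s p.2 then A p.2 else 1) z y *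
        (ψ (fun j => y (0, j)) * ∏ j, G j (fun i => y (i, j)))
      = (∏ j, ((∏ i, (if i = s j then A j else 1) ((fun i => z (i, j)) i) (y (i, j)))
          * G j (fun i => y (i, j)))) * ψ (fun j => y (0, j)) := by
    intro y
    rw [Lay_apply, Finset.prod_mul_distrib]
    rw [show (∏ p : Fin (n+1) × Fin n,
          (if p.1 = s p.2 then A p.2 else 1) (z p) (y p))
        = ∏ j, ∏ i, (if i = s j then A j else 1) (z (i, j)) (y (i, j)) from by
      rw [Fintype.prod_prod_type]; exact Finset.prod_comm]
    ring
  rw [show (dotProduct _ _) = ∑ y : Fin (n+1) × Fin n → Bool,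
      (∏ j, ((∏ i, (if i = s j then A j else 1) ((fun i => z (i, j)) i) (y (i, j)))
          * G j (fun i => y (i, j)))) * ψ (fun j => y (0, j)) from
    Finset.sum_congr rfl fun y _ => hexp y]
  rw [key (fun j c => (∏ i, (if i = s j then A j else 1) (z (i, j)) (c i)) * G j c) ψ]
  have hcol : ∀ (j : Fin n) (t : Fin n → Bool),
      (∑ c : Fin (n+1) → Bool, if c 0 = t j
          then (∏ i, (if i = s j then A j else 1) (z (i, j)) (c i)) * G j c else 0)
      = if z (0, j) = t j
          then (∑ b, A j (z (s j, j)) b * G j (Function.update (fun i => z (i, j)) (s j) b))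
          else 0 := by
    intro j t
    have h1 : ∀ c : Fin (n+1) → Bool,
        (if c 0 = t j then (∏ i, (if i = s j then A j else 1) (z (i, j)) (c i)) * G j c else 0)
        = (∏ i, (if i = s j then A j else 1) ((fun i => z (i, j)) i) (c i)) *
            (if c 0 = t j then G j c else 0) := by
      intro c; by_cases h : c 0 = t j <;> simp [h]
    rw [Finset.sum_congr rfl fun c _ => h1 c,
      colcollapse (s j) (A j) (fun i => z (i, j)) (fun c => if c 0 = t j then G j c else 0)]
    have h2 : ∀ b : Bool,
        (Function.update (fun i => z (i, j)) (s j) b) 0 = z (0, j) :=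
      fun b => Function.update_of_ne (Ne.symm (hs j)) _ _
    by_cases h : z (0, j) = t j
    · rw [if_pos h]
      exact Finset.sum_congr rfl fun b _ => by rw [h2 b, if_pos h]
    · rw [if_neg h]
      exact Finset.sum_eq_zero fun b _ => by rw [h2 b, if_neg h, mul_zero]
  rw [Finset.sum_congr rfl fun t _ => by
    rw [Finset.prod_congr rfl fun j _ => hcol j t]]
  exact pull ψ (fun j => z (0, j))
    (fun j => ∑ b, A j (z (s j, j)) b * G j (Function.update (fun i => z (i, j)) (s j) b))

lemma steptop {n : ℕ} (u : Fin n → Matrix Bool Bool ℂ)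
    (G : Fin n → (Fin (n+1) → Bool) → ℂ)
    (hG : ∀ j c b, G j (Function.update c 0 b) = G j c) (ψ : (Fin n → Bool) → ℂ) :
    (Lay (fun p : Fin (n+1) × Fin n => if p.1 = 0 then u p.2 else 1)).mulVec
      (fun z => ψ (fun j => z (0, j)) * ∏ j, G j (fun i => z (i, j)))
    = fun z => (∑ t : Fin n → Bool, (∏ j, u j (z (0, j)) (t j)) * ψ t) *
        ∏ j, G j (fun i => z (i, j)) := by
  funext z
  rw [Matrix.mulVec]
  have hexp : ∀ y : Fin (n+1) × Fin n → Bool,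
      Lay (fun p : Fin (n+1) × Fin n => if p.1 = 0 then u p.2 else 1) z y *
        (ψ (fun j => y (0, j)) * ∏ j, G j (fun i => y (i, j)))
      = (∏ j, ((∏ i, (if i = 0 then u j else 1) ((fun i => z (i, j)) i) (y (i, j)))
          * G j (fun i => y (i, j)))) * ψ (fun j => y (0, j)) := by
    intro y
    rw [Lay_apply, Finset.prod_mul_distrib]
    rw [show (∏ p : Fin (n+1) × Fin n,
          (if p.1 = 0 then u p.2 else 1) (z p) (y p))
        = ∏ j, ∏ i, (if i = 0 then u j else 1) (z (i, j)) (y (i, j)) from by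
      rw [Fintype.prod_prod_type]; exact Finset.prod_comm]
    ring
  rw [show (dotProduct _ _) = ∑ y : Fin (n+1) × Fin n → Bool,
      (∏ j, ((∏ i, (if i = 0 then u j else 1) ((fun i => z (i, j)) i) (y (i, j)))
          * G j (fun i => y (i, j)))) * ψ (fun j => y (0, j)) from
    Finset.sum_congr rfl fun y _ => hexp y]
  rw [key (fun j c => (∏ i, (if i = 0 then u j else 1) (z (i, j)) (c i)) * G j c) ψ]
  have hcol : ∀ (j : Fin n) (t : Fin n → Bool),
      (∑ c : Fin (n+1) → Bool, if c 0 = t j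
          then (∏ i, (if i = 0 then u j else 1) (z (i, j)) (c i)) * G j c else 0)
      = u j (z (0, j)) (t j) * G j (fun i => z (i, j)) := by
    intro j t
    have h1 : ∀ c : Fin (n+1) → Bool,
        (if c 0 = t j then (∏ i, (if i = 0 then u j else 1) (z (i, j)) (c i)) * G j c else 0)
        = (∏ i, (if i = 0 then u j else 1) ((fun i => z (i, j)) i) (c i)) *
            (if c 0 = t j then G j c else 0) := by
      intro c; by_cases h : c 0 = t j <;> simp [h]
    rw [Finset.sum_congr rfl fun c _ => h1 c,
      colcollapse 0 (u j) (fun i => z (i, j)) (fun c => if c 0 = t j then G j c else 0)]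
    rw [Fintype.sum_bool]
    simp only [Function.update_self, hG j]
    by_cases h : t j = true
    · simp [h]
    · have h' : t j = false := by simpa using h
      simp [h']
  rw [Finset.sum_congr rfl fun t _ => by
    rw [Finset.prod_congr rfl fun j _ => hcol j t, Finset.prod_mul_distrib]]
  rw [Finset.sum_mul]
  refine Finset.sum_congr rfl fun t _ => by ring

/-! ### Gates -/

noncomputable def rt2 : ℂ := ((Real.sqrt 2 : ℝ) : ℂ)

lemma rt2_mul_self : rt2 * rt2 = 2 := by
  rw [rt2, ← Complex.ofReal_mul, Real.mul_self_sqrt (by norm_num)]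
  norm_num

lemma inv_rt2_sq : rt2⁻¹ * rt2⁻¹ = (2:ℂ)⁻¹ := by
  rw [← mul_inv, rt2_mul_self]

noncomputable def Hm : Matrix Bool Bool ℂ :=
  Matrix.of fun a b => (if a = true ∧ b = true then (-1:ℂ) else 1) * rt2⁻¹

def Xm : Matrix Bool Bool ℂ := Matrix.of fun a b => if a = b then 0 else 1

lemma rt2_sq_inv : ((rt2:ℂ)^2)⁻¹ = (2:ℂ)⁻¹ := by rw [sq, rt2_mul_self]

lemma inv_rt2_sq' : (rt2⁻¹:ℂ)^2 = (2:ℂ)⁻¹ := by rw [sq, inv_rt2_sq]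

lemma star_rt2_inv : star (rt2⁻¹) = rt2⁻¹ := by
  rw [rt2]
  rw [show star ((((Real.sqrt 2 : ℝ)):ℂ)⁻¹) = (starRingEnd ℂ) ((((Real.sqrt 2 : ℝ)):ℂ)⁻¹) from rfl,
    map_inv₀ (starRingEnd ℂ), Complex.conj_ofReal]

lemma Hm_unitary : Hm ∈ Matrix.unitaryGroup Bool ℂ := by
  rw [Matrix.mem_unitaryGroup_iff]
  apply Matrix.ext
  intro a b
  rw [Matrix.mul_apply, Fintype.sum_bool, Matrix.star_apply, Matrix.star_apply]
  have hs : ∀ x y : Bool, star (Hm x y) = Hm x y := by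
    intro x y
    show (starRingEnd ℂ) _ = _
    simp only [Hm, Matrix.of_apply, map_mul]
    rw [show (starRingEnd ℂ) rt2⁻¹ = rt2⁻¹ from star_rt2_inv]
    congr 1
    split <;> simp
  rw [hs, hs]
  cases a <;> cases b <;>
    simp only [Hm, Matrix.of_apply, Matrix.one_apply] <;> norm_num
  all_goals ring_nf
  all_goals (rw [inv_rt2_sq']; norm_num)

lemma Xm_unitary : Xm ∈ Matrix.unitaryGroup Bool ℂ := by
  rw [Matrix.mem_unitaryGroup_iff]
  apply Matrix.ext
  intro a b
  rw [Matrix.mul_apply, Fintype.sum_bool, Matrix.star_apply, Matrix.star_apply]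
  have hs : ∀ x y : Bool, star (Xm x y) = Xm x y := by
    intro x y
    show (starRingEnd ℂ) _ = _
    simp only [Xm, Matrix.of_apply]
    split <;> simp
  rw [hs, hs]
  cases a <;> cases b <;> simp [Xm, Matrix.one_apply]

/-! ### Column-stage functions -/

section stage
variable {m : ℕ}

def GA (c : Fin (m+1) → Bool) : ℂ := if ∀ i, i ≠ 0 → c i = true then 1 else 0

def GD (a : Fin (m+1)) (c : Fin (m+1) → Bool) : ℂ :=
  if ∀ i, i ≠ 0 → i ≠ a → c i = true then 1 else 0

def wca (a : Fin (m+1)) (c : Fin (m+1) → Bool) : ℂ :=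
  if ∀ i, i ≤ a → c i = true then -1 else 1

noncomputable def g1 (a : Fin (m+1)) (c : Fin (m+1) → Bool) : ℂ :=
  GD a c * if c a = false then 1 else 0
noncomputable def g2 (a : Fin (m+1)) (c : Fin (m+1) → Bool) : ℂ := GD a c * rt2⁻¹
noncomputable def g4 (a : Fin (m+1)) (c : Fin (m+1) → Bool) : ℂ :=
  GD a c * if c a = c 0 then 1 else 0
noncomputable def g5 (a : Fin (m+1)) (c : Fin (m+1) → Bool) : ℂ :=
  GD a c * Hm (c a) (c 0)

variable {a : Fin (m+1)} (ha : a ≠ 0) (c : Fin (m+1) → Bool)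

lemma hGDupd (b : Bool) : GD a (Function.update c a b) = GD a c := by
  unfold GD
  refine if_congr ⟨fun h i hi hia => ?_, fun h i hi hia => ?_⟩ rfl rfl
  · have := h i hi hia; rwa [Function.update_of_ne hia] at this
  · rw [Function.update_of_ne hia]; exact h i hi hia

lemma hGA0upd (b : Bool) : GA (Function.update c 0 b) = GA c := by
  unfold GA
  refine if_congr ⟨fun h i hi => ?_, fun h i hi => ?_⟩ rfl rfl
  · have := h i hi; rwa [Function.update_of_ne hi] at this
  · rw [Function.update_of_ne hi]; exact h i hi

include ha in
lemma hGAupd (b : Bool) :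
    GA (Function.update c a b) = (if b = true then (1:ℂ) else 0) * GD a c := by
  unfold GA GD
  by_cases hD : ∀ i, i ≠ 0 → i ≠ a → c i = true
  · by_cases hb : b = true
    · rw [if_pos hb, if_pos hD, one_mul, if_pos]
      intro i hi
      by_cases hia : i = a
      · subst hia; rw [Function.update_self]; exact hb
      · rw [Function.update_of_ne hia]; exact hD i hi hia
    · rw [if_neg hb, zero_mul, if_neg]
      intro hall
      apply hb
      have := hall a ha
      rwa [Function.update_self] at this
  · rw [if_neg hD, mul_zero, if_neg]
    intro hall
    apply hD
    intro i hi hia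
    have := hall i hi
    rwa [Function.update_of_ne hia] at this

include ha in
lemma hGAD : GA c = GD a c * if c a = true then (1:ℂ) else 0 := by
  unfold GA GD
  by_cases hD : ∀ i, i ≠ 0 → i ≠ a → c i = true
  · by_cases hb : c a = true
    · rw [if_pos hb, if_pos hD, mul_one, if_pos]
      intro i hi
      by_cases hia : i = a
      · subst hia; exact hb
      · exact hD i hi hia
    · rw [if_neg hb, mul_zero, if_neg]
      exact fun hall => hb (hall a ha)
  · rw [if_neg hD, zero_mul, if_neg]
    exact fun hall => hD fun i hi hia => hall i hi

lemma hwca (hD : ∀ i, i ≠ 0 → i ≠ a → c i = true) :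
    wca a c = if c 0 = true ∧ c a = true then (-1:ℂ) else 1 := by
  unfold wca
  refine if_congr ⟨fun h => ⟨h 0 (Fin.zero_le a), h a le_rfl⟩, fun hp i hi => ?_⟩ rfl rfl
  by_cases hi0 : i = 0
  · subst hi0; exact hp.1
  · by_cases hia : i = a
    · subst hia; exact hp.2
    · exact hD i hi0 hia

lemma e0 (G : (Fin (m+1) → Bool) → ℂ) :
    (∑ b, (1 : Matrix Bool Bool ℂ) (c a) b * G (Function.update c a b)) = G c := by
  rw [Fintype.sum_bool]
  have h1 : ∀ x y : Bool, (1 : Matrix Bool Bool ℂ) x y = if x = y then 1 else 0 :=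
    fun x y => Matrix.one_apply
  rw [h1, h1]
  cases h : c a
  · rw [if_neg (by simp [h]), if_pos (by simp [h]), zero_mul, one_mul, zero_add,
      ← h, Function.update_eq_self]
  · rw [if_pos (by simp [h]), if_neg (by simp [h]), zero_mul, one_mul, add_zero,
      ← h, Function.update_eq_self]

include ha in
lemma e1 : (∑ b, Xm (c a) b * GA (Function.update c a b)) = g1 a c := by
  rw [Fintype.sum_bool, hGAupd ha c true, hGAupd ha c false, g1]
  cases h : c a <;> simp [Xm, h] <;> ring

include ha in
lemma e2 : (∑ b, Hm (c a) b * g1 a (Function.update c a b)) = g2 a c := by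
  rw [Fintype.sum_bool]
  unfold g1 g2
  rw [hGDupd, hGDupd]
  simp only [Function.update_self]
  cases h : c a <;> simp [Hm, h] <;> ring

include ha in
lemma e3 : (∑ b, Hm (c a) b *
      (wca a (Function.update c a b) * g2 a (Function.update c a b))) = g4 a c := by
  rw [Fintype.sum_bool]
  unfold g2 g4
  rw [hGDupd, hGDupd]
  by_cases hD : ∀ i, i ≠ 0 → i ≠ a → c i = true
  · have hw : ∀ b : Bool, wca a (Function.update c a b)
        = if c 0 = true ∧ b = true then (-1:ℂ) else 1 := by
      intro b
      rw [hwca (Function.update c a b) (fun i hi hia => by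
        rw [Function.update_of_ne hia]; exact hD i hi hia)]
      rw [Function.update_of_ne (Ne.symm ha), Function.update_self]
    rw [hw, hw]
    have hD1 : GD a c = (1:ℂ) := if_pos hD
    rw [hD1]
    cases h0 : c 0 <;> cases hA : c a <;>
      simp only [Hm, Matrix.of_apply, h0, hA] <;> norm_num
    all_goals ring_nf
    all_goals (rw [inv_rt2_sq']; norm_num)
  · have hD0 : GD a c = (0:ℂ) := if_neg hD
    rw [hD0]
    simp

include ha in
lemma e4 : (∑ b, Hm (c a) b * g4 a (Function.update c a b)) = g5 a c := by
  rw [Fintype.sum_bool]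
  unfold g4 g5
  rw [hGDupd, hGDupd]
  simp only [Function.update_self, Function.update_of_ne (Ne.symm ha)]
  cases h0 : c 0 <;> cases hA : c a <;>
    simp only [Hm, Matrix.of_apply, hA, h0] <;> norm_num
  all_goals ring

include ha in
lemma e5 : wca a c * g5 a c = g2 a c := by
  unfold g5 g2
  by_cases hD : ∀ i, i ≠ 0 → i ≠ a → c i = true
  · rw [hwca c hD]
    have hD1 : GD a c = (1:ℂ) := if_pos hD
    rw [hD1]
    cases h0 : c 0 <;> cases hA : c a <;>
      · simp only [Hm, Matrix.of_apply, hA, h0]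
        norm_num
  · have hD0 : GD a c = (0:ℂ) := if_neg hD
    rw [hD0]
    simp

include ha in
lemma e6 : (∑ b, Hm (c a) b * g2 a (Function.update c a b)) = g1 a c := by
  rw [Fintype.sum_bool]
  unfold g2 g1
  rw [hGDupd, hGDupd]
  cases hA : c a <;>
    simp only [Hm, Matrix.of_apply, hA] <;> norm_num
  all_goals ring_nf
  all_goals (rw [inv_rt2_sq']; ring)

include ha in
lemma e7 : (∑ b, Xm (c a) b * g1 a (Function.update c a b)) = GA c := by
  rw [Fintype.sum_bool]
  unfold g1
  rw [hGDupd, hGDupd]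
  simp only [Function.update_self]
  rw [hGAD ha c]
  cases hA : c a <;> simp [Xm, hA]

end stage

/-! ### The 2D construction -/

def CZof {ι : Type*} [Fintype ι] [DecidableEq ι] (𝒮 : Finset (Finset ι)) :
    Matrix (ι → Bool) (ι → Bool) ℂ :=
  Matrix.of fun x y =>
    if x = y then ∏ T ∈ 𝒮, (if ∀ i ∈ T, x i = true then (-1:ℂ) else 1) else 0

lemma czof_mulVec {ι : Type*} [Fintype ι] [DecidableEq ι] (𝒮 : Finset (Finset ι))
    (v : (ι → Bool) → ℂ) :
    (CZof 𝒮).mulVec v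
    = fun x => (∏ T ∈ 𝒮, if ∀ i ∈ T, x i = true then (-1:ℂ) else 1) * v x := by
  unfold CZof
  exact diag_mulVec _ v

lemma czof_layer {ι : Type*} [Fintype ι] [DecidableEq ι] (P : Finset ι → Prop)
    (𝒮 : Finset (Finset ι)) (hP : ∀ T ∈ 𝒮, P T)
    (hdis : (𝒮 : Set (Finset ι)).Pairwise fun T T' => Disjoint T T') :
    IsCZLayer P (CZof 𝒮) :=
  ⟨𝒮, hP, hdis, fun _ _ => rfl⟩

def mph {n : ℕ} (𝒯 : Finset (Finset (Fin n))) (x : Fin n → Bool) : ℂ :=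
  ∏ T ∈ 𝒯, if ∀ i ∈ T, x i = true then (-1:ℂ) else 1

noncomputable def embedV (n : ℕ) (φ : (Fin n → Bool) → ℂ) :
    (Fin (n+1) × Fin n → Bool) → ℂ := fun z =>
  if ∀ p : Fin (n + 1) × Fin n, p.1 ≠ 0 → z p = true then φ (fun j => z (0, j)) else 0

lemma embed_eq {n : ℕ} (φ : (Fin n → Bool) → ℂ) :
    embedV n φ = fun z => φ (fun j => z (0, j)) * ∏ j, GA (fun i => z (i, j)) := by
  funext z
  unfold embedV GA
  rw [prodIte univ (fun j => ∀ i, i ≠ 0 → z (i, j) = true) (fun _ => (1:ℂ)),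
    Finset.prod_const_one]
  have hcond : (∀ p : Fin (n + 1) × Fin n, p.1 ≠ 0 → z p = true)
      ↔ (∀ j ∈ (univ : Finset (Fin n)), ∀ i, i ≠ 0 → z (i, j) = true) := by
    constructor
    · intro h j _ i hi; exact h (i, j) hi
    · intro h p hp; exact h p.2 (Finset.mem_univ _) p.1 hp
  by_cases h : ∀ p : Fin (n + 1) × Fin n, p.1 ≠ 0 → z p = true
  · rw [if_pos h, if_pos (hcond.mp h), mul_one]
  · rw [if_neg h, if_neg (fun hc => h (hcond.mpr hc)), mul_zero]

section construction
variable {n : ℕ} (𝒯 : Finset (Finset (Fin n)))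

def Sset : Finset (Fin n) := 𝒯.sup id

lemma mem_Sset {j : Fin n} : j ∈ Sset 𝒯 ↔ ∃ T ∈ 𝒯, j ∈ T := by
  simp [Sset, Finset.mem_sup]

noncomputable def czT (j : Fin n) : Finset (Fin n) :=
  if h : ∃ T ∈ 𝒯, j ∈ T then h.choose else ∅

lemma czT_spec {j : Fin n} (hj : j ∈ Sset 𝒯) : czT 𝒯 j ∈ 𝒯 ∧ j ∈ czT 𝒯 j := by
  rw [mem_Sset] at hj
  rw [czT, dif_pos hj]
  exact ⟨hj.choose_spec.1, hj.choose_spec.2⟩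

variable (hdis : (𝒯 : Set (Finset (Fin n))).Pairwise fun T T' => Disjoint T T')

include hdis in
lemma czT_eq {j : Fin n} {T : Finset (Fin n)} (hT : T ∈ 𝒯) (hj : j ∈ T) :
    czT 𝒯 j = T := by
  have hjS : j ∈ Sset 𝒯 := (mem_Sset 𝒯).mpr ⟨T, hT, hj⟩
  obtain ⟨h1, h2⟩ := czT_spec 𝒯 hjS
  by_contra hne
  exact Finset.disjoint_left.mp (hdis h1 hT hne) h2 hj

def rowOf (T : Finset (Fin n)) : Fin (n+1) :=
  if h : T.Nonempty then (T.min' h).succ else 0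

lemma rowOf_ne_zero {T : Finset (Fin n)} (hT : T.Nonempty) : rowOf T ≠ 0 := by
  rw [rowOf, dif_pos hT]
  exact Fin.succ_ne_zero _

include hdis in
lemma rowOf_inj {T T' : Finset (Fin n)} (hT : T ∈ 𝒯) (hT' : T' ∈ 𝒯)
    (h1 : T.Nonempty) (h2 : T'.Nonempty) (hne : T ≠ T') : rowOf T ≠ rowOf T' := by
  rw [rowOf, dif_pos h1, rowOf, dif_pos h2]
  intro h
  have hmin : T.min' h1 = T'.min' h2 := Fin.succ_injective n h
  have h3 : T.min' h1 ∈ T' := hmin ▸ Finset.min'_mem T' h2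
  exact Finset.disjoint_left.mp (hdis hT hT' hne) (Finset.min'_mem T h1) h3

noncomputable def act (hn : 1 ≤ n) (j : Fin n) : Fin (n+1) :=
  if j ∈ Sset 𝒯 then rowOf (czT 𝒯 j) else Fin.last n

lemma act_ne_zero (hn : 1 ≤ n) (j : Fin n) : act 𝒯 hn j ≠ 0 := by
  rw [act]
  split
  · rename_i hj
    exact rowOf_ne_zero ⟨j, (czT_spec 𝒯 hj).2⟩
  · intro h
    have : (Fin.last n).val = (0 : Fin (n+1)).val := by rw [h]
    simp [Fin.last] at this
    omega

include hdis in
lemma act_eq (hn : 1 ≤ n) {j : Fin n} {T : Finset (Fin n)} (hT : T ∈ 𝒯) (hj : j ∈ T) :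
    act 𝒯 hn j = rowOf T := by
  rw [act, if_pos ((mem_Sset 𝒯).mpr ⟨T, hT, hj⟩), czT_eq 𝒯 hdis hT hj]

end construction

section construction2
variable {n : ℕ} (𝒯 : Finset (Finset (Fin n))) (hn : 1 ≤ n)

noncomputable def colGates (hn : 1 ≤ n) : Finset (Finset (Fin (n+1) × Fin n)) :=
  (Sset 𝒯).image (fun j => Finset.Icc 0 (act 𝒯 hn j) ×ˢ {j})

noncomputable def rowGates : Finset (Finset (Fin (n+1) × Fin n)) :=
  𝒯.image (fun T => if T.Nonempty then {rowOf T} ×ˢ (Finset.univ : Finset (Fin n)) else ∅)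

lemma colGates_layer :
    IsCZLayer (IsRowColInterval (n+1) n) (CZof (colGates 𝒯 hn)) := by
  apply czof_layer
  · intro T hT
    rw [colGates, Finset.mem_image] at hT
    obtain ⟨j, _, rfl⟩ := hT
    exact Or.inr ⟨j, 0, act 𝒯 hn j, rfl⟩
  · intro T1 h1 T2 h2 hne
    rw [Finset.mem_coe, colGates, Finset.mem_image] at h1 h2
    obtain ⟨j1, _, rfl⟩ := h1
    obtain ⟨j2, _, rfl⟩ := h2
    have hj : j1 ≠ j2 := fun h => hne (by rw [h])
    rw [Finset.disjoint_left]
    intro p hp1 hp2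
    rw [Finset.mem_product, Finset.mem_singleton] at hp1 hp2
    exact hj (hp1.2 ▸ hp2.2)

lemma univ_eq_Icc : (Finset.univ : Finset (Fin n)) = Finset.Icc ⟨0, hn⟩ ⟨n-1, by omega⟩ := by
  ext x
  simp only [Finset.mem_univ, Finset.mem_Icc, true_iff]
  have hx := x.isLt
  constructor <;> rw [Fin.le_def] <;> simp <;> omega

include hn in
lemma empty_rowcol : IsRowColInterval (n+1) n (∅ : Finset (Fin (n+1) × Fin n)) := by
  refine Or.inr ⟨⟨0, hn⟩, ⟨1, by omega⟩, ⟨0, by omega⟩, ?_⟩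
  rw [Finset.Icc_eq_empty (by rw [Fin.mk_le_mk]; omega), Finset.empty_product]

include hn in
lemma rowGates_layer :
    IsCZLayer (IsRowColInterval (n+1) n) (CZof (rowGates 𝒯)) := by
  apply czof_layer
  · intro T hT
    rw [rowGates, Finset.mem_image] at hT
    obtain ⟨T', _, rfl⟩ := hT
    by_cases h : T'.Nonempty
    · rw [if_pos h]
      exact Or.inl ⟨rowOf T', ⟨0, hn⟩, ⟨n-1, by omega⟩, by rw [← univ_eq_Icc]⟩
    · rw [if_neg h]
      exact empty_rowcol hn
  · intro T1 h1 T2 h2 hne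
    rw [Finset.mem_coe, rowGates, Finset.mem_image] at h1 h2
    obtain ⟨A, hA, rfl⟩ := h1
    obtain ⟨B, hB, rfl⟩ := h2
    by_cases hA' : A.Nonempty <;> by_cases hB' : B.Nonempty
    · rw [if_pos hA', if_pos hB'] at hne ⊢
      have hrow : rowOf A ≠ rowOf B := by
        intro h
        exact hne (by rw [h])
      rw [Finset.disjoint_left]
      intro p hp1 hp2
      rw [Finset.mem_product, Finset.mem_singleton] at hp1 hp2
      exact hrow (hp1.1 ▸ hp2.1)
    · rw [if_neg hB']; exact Finset.disjoint_empty_right _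
    · rw [if_neg hA']; exact Finset.disjoint_empty_left _
    · rw [if_neg hA']; exact Finset.disjoint_empty_left _

lemma col_diag (z : Fin (n+1) × Fin n → Bool) :
    (∏ T ∈ colGates 𝒯 hn, if ∀ p ∈ T, z p = true then (-1:ℂ) else 1)
    = ∏ j : Fin n, (if j ∈ Sset 𝒯 then wca (act 𝒯 hn j) (fun i => z (i, j)) else 1) := by
  rw [colGates, Finset.prod_image ?hinj]
  case hinj =>
    intro j1 _ j2 _ heq
    have h1 : ((0 : Fin (n+1)), j1) ∈ Finset.Icc 0 (act 𝒯 hn j1) ×ˢ {j1} := by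
      rw [Finset.mem_product, Finset.mem_Icc, Finset.mem_singleton]
      exact ⟨⟨Fin.zero_le _, Fin.zero_le _⟩, rfl⟩
    rw [show Finset.Icc 0 (act 𝒯 hn j1) ×ˢ {j1} = Finset.Icc 0 (act 𝒯 hn j2) ×ˢ {j2} from heq,
      Finset.mem_product, Finset.mem_singleton] at h1
    exact h1.2
  rw [← Finset.prod_subset (Finset.subset_univ (Sset 𝒯))
    (fun j _ hj => if_neg hj)]
  refine Finset.prod_congr rfl fun j hj => ?_
  rw [if_pos hj]
  unfold wca
  refine if_congr ?_ rfl rfl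
  constructor
  · intro h i hi
    refine h (i, j) ?_
    rw [Finset.mem_product, Finset.mem_Icc, Finset.mem_singleton]
    exact ⟨⟨Fin.zero_le _, hi⟩, rfl⟩
  · intro h p hp
    rw [Finset.mem_product, Finset.mem_Icc, Finset.mem_singleton] at hp
    have := h p.1 hp.1.2
    rw [← hp.2] at this
    exact this

end construction2

lemma state_ext {n : ℕ} (ψ : (Fin n → Bool) → ℂ)
    {G G' : Fin n → (Fin (n+1) → Bool) → ℂ} (h : ∀ j c, G j c = G' j c) :
    (fun z : Fin (n+1) × Fin n → Bool =>
      ψ (fun j => z (0, j)) * ∏ j, G j (fun i => z (i, j)))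
    = fun z => ψ (fun j => z (0, j)) * ∏ j, G' j (fun i => z (i, j)) := by
  funext z
  congr 1
  exact Finset.prod_congr rfl fun j _ => h j _

set_option maxHeartbeats 2000000 in
lemma step {n : ℕ} (hn : 1 ≤ n) (𝒯 : Finset (Finset (Fin n)))
    (hdis : (𝒯 : Set (Finset (Fin n))).Pairwise fun T T' => Disjoint T T')
    (uLg : Fin n → Matrix Bool Bool ℂ)
    (huL : ∀ j, uLg j ∈ Matrix.unitaryGroup Bool ℂ)
    (d' : ℕ) (V' : Matrix (Fin (n+1) × Fin n → Bool) (Fin (n+1) × Fin n → Bool) ℂ)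
    (hq : IsQACOn (IsRowColInterval (n+1) n) d' V')
    (W : ((Fin n → Bool) → ℂ) → ((Fin n → Bool) → ℂ))
    (hact : ∀ φ, V'.mulVec (embedV n φ) = embedV n (W φ)) :
    ∃ V, IsQACOn (IsRowColInterval (n+1) n) (d'+7) V ∧
      ∀ φ, V.mulVec (embedV n φ)
        = embedV n (fun x => ∑ t, (∏ j, uLg j (x j) (t j)) * (mph 𝒯 t * W φ t)) := by
  have ha : ∀ j, act 𝒯 hn j ≠ 0 := act_ne_zero 𝒯 hn
  refine ⟨(Lay (fun p : Fin (n+1) × Fin n => if p.1 = 0 then uLg p.2 else 1) *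
      Lay (fun p : Fin (n+1) × Fin n =>
        if p.1 = act 𝒯 hn p.2 then (if p.2 ∈ Sset 𝒯 then Xm else 1) else 1) *
      Lay (fun p : Fin (n+1) × Fin n =>
        if p.1 = act 𝒯 hn p.2 then (if p.2 ∈ Sset 𝒯 then Hm else 1) else 1)) *
      CZof (colGates 𝒯 hn) *
      (Lay (fun p : Fin (n+1) × Fin n =>
        if p.1 = act 𝒯 hn p.2 then (if p.2 ∈ Sset 𝒯 then Hm else 1) else 1) *
       CZof (rowGates 𝒯) *
       (Lay (fun p : Fin (n+1) × Fin n =>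
          if p.1 = act 𝒯 hn p.2 then (if p.2 ∈ Sset 𝒯 then Hm else 1) else 1) *
        CZof (colGates 𝒯 hn) *
        ((Lay (fun p : Fin (n+1) × Fin n =>
            if p.1 = act 𝒯 hn p.2 then (if p.2 ∈ Sset 𝒯 then Hm else 1) else 1) *
          Lay (fun p : Fin (n+1) × Fin n =>
            if p.1 = act 𝒯 hn p.2 then (if p.2 ∈ Sset 𝒯 then Xm else 1) else 1)) *
         (1 : Matrix (Fin (n+1) × Fin n → Bool) (Fin (n+1) × Fin n → Bool) ℂ) * V'))),
    ?_, ?_⟩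
  · -- circuit structure
    have hux : ∀ p : Fin (n+1) × Fin n,
        (if p.1 = act 𝒯 hn p.2 then (if p.2 ∈ Sset 𝒯 then Xm else 1) else 1)
          ∈ Matrix.unitaryGroup Bool ℂ := by
      intro p
      split
      · split
        · exact Xm_unitary
        · exact one_mem _
      · exact one_mem _
    have huh : ∀ p : Fin (n+1) × Fin n,
        (if p.1 = act 𝒯 hn p.2 then (if p.2 ∈ Sset 𝒯 then Hm else 1) else 1)
          ∈ Matrix.unitaryGroup Bool ℂ := by
      intro p
      split
      · split
        · exact Hm_unitary
        · exact one_mem _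
      · exact one_mem _
    have hut : ∀ p : Fin (n+1) × Fin n,
        (if p.1 = 0 then uLg p.2 else 1) ∈ Matrix.unitaryGroup Bool ℂ := by
      intro p
      split
      · exact huL _
      · exact one_mem _
    refine qac_cons ?_ (colGates_layer 𝒯 hn)
      (qac_cons ?_ (rowGates_layer 𝒯 hn)
        (qac_cons ?_ (colGates_layer 𝒯 hn)
          (qac_cons ?_ (czLayer_one _) (qac_pad (qac_pad (qac_pad hq))))))
    · rw [layMul, layMul]
      exact lay_single _ fun p => mul_mem (mul_mem (hut p) (hux p)) (huh p)
    · exact lay_single _ huh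
    · exact lay_single _ huh
    · rw [layMul]
      exact lay_single _ fun p => mul_mem (huh p) (hux p)
  · -- action
    intro φ
    have hsplit : ∀ (v : (Fin (n+1) × Fin n → Bool) → ℂ)
        (A1 A2 A3 M1 A4 M2 A5 M3 A6 A7 B :
          Matrix (Fin (n+1) × Fin n → Bool) (Fin (n+1) × Fin n → Bool) ℂ),
        ((A1 * A2 * A3) * M1 * (A4 * M2 * (A5 * M3 * ((A6 * A7) * 1 * B)))).mulVec v
        = A1.mulVec (A2.mulVec (A3.mulVec (M1.mulVec (A4.mulVec (M2.mulVec
            (A5.mulVec (M3.mulVec (A6.mulVec (A7.mulVec (B.mulVec v)))))))))) := by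
      intro v A1 A2 A3 M1 A4 M2 A5 M3 A6 A7 B
      simp only [← Matrix.mulVec_mulVec, Matrix.one_mulVec]
    rw [hsplit, hact φ]
    -- per-column sum identities
    have E1' : ∀ (j : Fin n) (c : Fin (n+1) → Bool),
        (∑ b, (if j ∈ Sset 𝒯 then Xm else 1) (c (act 𝒯 hn j)) b *
          GA (Function.update c (act 𝒯 hn j) b))
        = (if j ∈ Sset 𝒯 then g1 (act 𝒯 hn j) c else GA c) := by
      intro j c
      by_cases hj : j ∈ Sset 𝒯
      · simp only [if_pos hj]; exact e1 (ha j) c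
      · simp only [if_neg hj]; exact e0 c GA
    have E2' : ∀ (j : Fin n) (c : Fin (n+1) → Bool),
        (∑ b, (if j ∈ Sset 𝒯 then Hm else 1) (c (act 𝒯 hn j)) b *
          (if j ∈ Sset 𝒯 then g1 (act 𝒯 hn j) (Function.update c (act 𝒯 hn j) b)
            else GA (Function.update c (act 𝒯 hn j) b)))
        = (if j ∈ Sset 𝒯 then g2 (act 𝒯 hn j) c else GA c) := by
      intro j c
      by_cases hj : j ∈ Sset 𝒯
      · simp only [if_pos hj]; exact e2 (ha j) c
      · simp only [if_neg hj]; exact e0 c GA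
    have E3' : ∀ (j : Fin n) (c : Fin (n+1) → Bool),
        (∑ b, (if j ∈ Sset 𝒯 then Hm else 1) (c (act 𝒯 hn j)) b *
          ((if j ∈ Sset 𝒯 then wca (act 𝒯 hn j) (Function.update c (act 𝒯 hn j) b) else 1) *
           (if j ∈ Sset 𝒯 then g2 (act 𝒯 hn j) (Function.update c (act 𝒯 hn j) b)
            else GA (Function.update c (act 𝒯 hn j) b))))
        = (if j ∈ Sset 𝒯 then g4 (act 𝒯 hn j) c else GA c) := by
      intro j c
      by_cases hj : j ∈ Sset 𝒯
      · simp only [if_pos hj]; exact e3 (ha j) c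
      · simp only [if_neg hj, one_mul]; exact e0 c GA
    have E4' : ∀ (j : Fin n) (c : Fin (n+1) → Bool),
        (∑ b, (if j ∈ Sset 𝒯 then Hm else 1) (c (act 𝒯 hn j)) b *
          (if j ∈ Sset 𝒯 then g4 (act 𝒯 hn j) (Function.update c (act 𝒯 hn j) b)
            else GA (Function.update c (act 𝒯 hn j) b)))
        = (if j ∈ Sset 𝒯 then g5 (act 𝒯 hn j) c else GA c) := by
      intro j c
      by_cases hj : j ∈ Sset 𝒯
      · simp only [if_pos hj]; exact e4 (ha j) c
      · simp only [if_neg hj]; exact e0 c GA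
    have E5' : ∀ (j : Fin n) (c : Fin (n+1) → Bool),
        ((if j ∈ Sset 𝒯 then wca (act 𝒯 hn j) c else 1) *
          (if j ∈ Sset 𝒯 then g5 (act 𝒯 hn j) c else GA c))
        = (if j ∈ Sset 𝒯 then g2 (act 𝒯 hn j) c else GA c) := by
      intro j c
      by_cases hj : j ∈ Sset 𝒯
      · simp only [if_pos hj]; exact e5 (ha j) c
      · simp only [if_neg hj, one_mul]
    have E6' : ∀ (j : Fin n) (c : Fin (n+1) → Bool),
        (∑ b, (if j ∈ Sset 𝒯 then Hm else 1) (c (act 𝒯 hn j)) b *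
          (if j ∈ Sset 𝒯 then g2 (act 𝒯 hn j) (Function.update c (act 𝒯 hn j) b)
            else GA (Function.update c (act 𝒯 hn j) b)))
        = (if j ∈ Sset 𝒯 then g1 (act 𝒯 hn j) c else GA c) := by
      intro j c
      by_cases hj : j ∈ Sset 𝒯
      · simp only [if_pos hj]; exact e6 (ha j) c
      · simp only [if_neg hj]; exact e0 c GA
    have E7' : ∀ (j : Fin n) (c : Fin (n+1) → Bool),
        (∑ b, (if j ∈ Sset 𝒯 then Xm else 1) (c (act 𝒯 hn j)) b *
          (if j ∈ Sset 𝒯 then g1 (act 𝒯 hn j) (Function.update c (act 𝒯 hn j) b)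
            else GA (Function.update c (act 𝒯 hn j) b)))
        = GA c := by
      intro j c
      by_cases hj : j ∈ Sset 𝒯
      · simp only [if_pos hj]; exact e7 (ha j) c
      · simp only [if_neg hj]; exact e0 c GA
    -- row CZ phase extraction
    have E8 : ∀ z : Fin (n+1) × Fin n → Bool,
        (∏ T ∈ rowGates 𝒯, if ∀ p ∈ T, z p = true then (-1:ℂ) else 1) *
          (W φ (fun j => z (0, j)) * ∏ j, (if j ∈ Sset 𝒯 then
            g4 (act 𝒯 hn j) (fun i => z (i, j)) else GA (fun i => z (i, j))))
        = (fun x => mph 𝒯 x * W φ x) (fun j => z (0, j)) *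
            ∏ j, (if j ∈ Sset 𝒯 then g4 (act 𝒯 hn j) (fun i => z (i, j))
              else GA (fun i => z (i, j))) := by
      intro z
      by_cases hz : ∀ j : Fin n, (if j ∈ Sset 𝒯 then
          g4 (act 𝒯 hn j) (fun i => z (i, j)) else GA (fun i => z (i, j))) ≠ 0
      · have fact1 : ∀ j, j ∈ Sset 𝒯 →
            ((∀ i, i ≠ 0 → i ≠ act 𝒯 hn j → z (i, j) = true) ∧
              z (act 𝒯 hn j, j) = z (0, j)) := by
          intro j hj
          have h := hz j
          rw [if_pos hj] at h
          unfold g4 GD at h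
          rcases mul_ne_zero_iff.mp h with ⟨hA, hB⟩
          constructor
          · by_contra hc; rw [if_neg hc] at hA; exact hA rfl
          · by_contra hc; rw [if_neg hc] at hB; exact hB rfl
        have fact2 : ∀ j, j ∉ Sset 𝒯 → ∀ i, i ≠ 0 → z (i, j) = true := by
          intro j hj
          have h := hz j
          rw [if_neg hj] at h
          unfold GA at h
          by_contra hc
          push_neg at hc
          obtain ⟨i, hi1, hi2⟩ := hc
          exact h (if_neg (fun hall => hi2 (hall i hi1)))
        have hinj : ∀ x ∈ 𝒯, ∀ y ∈ 𝒯,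
            (if x.Nonempty then ({rowOf x} ×ˢ (Finset.univ : Finset (Fin n))) else ∅)
            = (if y.Nonempty then ({rowOf y} ×ˢ (Finset.univ : Finset (Fin n))) else ∅)
            → x = y := by
          intro x hx y hy hxy
          by_cases hx' : x.Nonempty <;> by_cases hy' : y.Nonempty
          · rw [if_pos hx', if_pos hy'] at hxy
            by_contra hne
            have h1 : (rowOf x, (⟨0, hn⟩ : Fin n)) ∈
                {rowOf x} ×ˢ (Finset.univ : Finset (Fin n)) := by
              rw [Finset.mem_product]
              exact ⟨Finset.mem_singleton_self _, Finset.mem_univ _⟩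
            rw [hxy, Finset.mem_product, Finset.mem_singleton] at h1
            exact rowOf_inj 𝒯 hdis hx hy hx' hy' hne h1.1
          · rw [if_pos hx', if_neg hy'] at hxy
            have h1 : (rowOf x, (⟨0, hn⟩ : Fin n)) ∈
                {rowOf x} ×ˢ (Finset.univ : Finset (Fin n)) := by
              rw [Finset.mem_product]
              exact ⟨Finset.mem_singleton_self _, Finset.mem_univ _⟩
            rw [hxy] at h1
            exact absurd h1 (Finset.notMem_empty _)
          · rw [if_neg hx', if_pos hy'] at hxy
            have h1 : (rowOf y, (⟨0, hn⟩ : Fin n)) ∈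
                {rowOf y} ×ˢ (Finset.univ : Finset (Fin n)) := by
              rw [Finset.mem_product]
              exact ⟨Finset.mem_singleton_self _, Finset.mem_univ _⟩
            rw [← hxy] at h1
            exact absurd h1 (Finset.notMem_empty _)
          · rw [Finset.not_nonempty_iff_eq_empty.mp hx',
              Finset.not_nonempty_iff_eq_empty.mp hy']
        have hsuff : (∏ T ∈ rowGates 𝒯, if ∀ p ∈ T, z p = true then (-1:ℂ) else 1)
            = mph 𝒯 (fun j => z (0, j)) := by
          rw [rowGates, Finset.prod_image hinj]
          unfold mph
          refine Finset.prod_congr rfl fun T hT => ?_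
          by_cases hTne : T.Nonempty
          · rw [if_pos hTne]
            refine if_congr ?_ rfl rfl
            constructor
            · intro hall i hiT
              have hiS : i ∈ Sset 𝒯 := (mem_Sset 𝒯).mpr ⟨T, hT, hiT⟩
              have hAi : act 𝒯 hn i = rowOf T := act_eq 𝒯 hdis hn hT hiT
              have h2 := hall (rowOf T, i) (by
                rw [Finset.mem_product]
                exact ⟨Finset.mem_singleton_self _, Finset.mem_univ _⟩)
              have h3 := (fact1 i hiS).2
              rw [hAi] at h3
              show z (0, i) = true
              rw [← h3]
              exact h2
            · intro htop p hp
              obtain ⟨p1, p2⟩ := p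
              rw [Finset.mem_product, Finset.mem_singleton] at hp
              have hp1 : p1 = rowOf T := hp.1
              subst hp1
              by_cases hjT : p2 ∈ T
              · have hiS : p2 ∈ Sset 𝒯 := (mem_Sset 𝒯).mpr ⟨T, hT, hjT⟩
                have hAj : act 𝒯 hn p2 = rowOf T := act_eq 𝒯 hdis hn hT hjT
                have h2 := (fact1 p2 hiS).2
                rw [hAj] at h2
                rw [h2]
                exact htop p2 hjT
              · by_cases hjS : p2 ∈ Sset 𝒯
                · obtain ⟨hT', hjT'⟩ := czT_spec 𝒯 hjS
                  have hAj : act 𝒯 hn p2 = rowOf (czT 𝒯 p2) := by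
                    rw [act, if_pos hjS]
                  have hneq : czT 𝒯 p2 ≠ T := fun h => hjT (h ▸ hjT')
                  have hrow : rowOf T ≠ act 𝒯 hn p2 := by
                    rw [hAj]
                    exact Ne.symm (rowOf_inj 𝒯 hdis hT' hT ⟨p2, hjT'⟩ hTne hneq)
                  exact (fact1 p2 hjS).1 (rowOf T) (rowOf_ne_zero hTne) hrow
                · exact fact2 p2 hjS (rowOf T) (rowOf_ne_zero hTne)
          · rw [if_neg hTne]
            rw [Finset.not_nonempty_iff_eq_empty.mp hTne]
            simp
        rw [hsuff]
        ring
      · push_neg at hz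
        obtain ⟨j0, hj0⟩ := hz
        rw [Finset.prod_eq_zero (Finset.mem_univ j0) hj0]
        ring
    -- the chain of states
    have st1 : (Lay (fun p : Fin (n+1) × Fin n =>
          if p.1 = act 𝒯 hn p.2 then (if p.2 ∈ Sset 𝒯 then Xm else 1) else 1)).mulVec
        (fun z => W φ (fun j => z (0, j)) * ∏ j, GA (fun i => z (i, j)))
        = fun z => W φ (fun j => z (0, j)) * ∏ j, (if j ∈ Sset 𝒯 then
            g1 (act 𝒯 hn j) (fun i => z (i, j)) else GA (fun i => z (i, j))) := by
      rw [stepsite (fun j => act 𝒯 hn j) ha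
        (fun j => if j ∈ Sset 𝒯 then Xm else 1) (fun _ => GA) (W φ)]
      funext z
      congr 1
      exact Finset.prod_congr rfl fun j _ => E1' j (fun i => z (i, j))
    have st2 : (Lay (fun p : Fin (n+1) × Fin n =>
          if p.1 = act 𝒯 hn p.2 then (if p.2 ∈ Sset 𝒯 then Hm else 1) else 1)).mulVec
        (fun z => W φ (fun j => z (0, j)) * ∏ j, (if j ∈ Sset 𝒯 then
            g1 (act 𝒯 hn j) (fun i => z (i, j)) else GA (fun i => z (i, j))))
        = fun z => W φ (fun j => z (0, j)) * ∏ j, (if j ∈ Sset 𝒯 then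
            g2 (act 𝒯 hn j) (fun i => z (i, j)) else GA (fun i => z (i, j))) := by
      rw [stepsite (fun j => act 𝒯 hn j) ha
        (fun j => if j ∈ Sset 𝒯 then Hm else 1)
        (fun j c => if j ∈ Sset 𝒯 then g1 (act 𝒯 hn j) c else GA c) (W φ)]
      funext z
      congr 1
      exact Finset.prod_congr rfl fun j _ => E2' j (fun i => z (i, j))
    have st3 : (CZof (colGates 𝒯 hn)).mulVec
        (fun z => W φ (fun j => z (0, j)) * ∏ j, (if j ∈ Sset 𝒯 then
            g2 (act 𝒯 hn j) (fun i => z (i, j)) else GA (fun i => z (i, j))))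
        = fun z => W φ (fun j => z (0, j)) * ∏ j,
            ((if j ∈ Sset 𝒯 then wca (act 𝒯 hn j) (fun i => z (i, j)) else 1) *
             (if j ∈ Sset 𝒯 then g2 (act 𝒯 hn j) (fun i => z (i, j))
              else GA (fun i => z (i, j)))) := by
      rw [czof_mulVec]
      funext z
      rw [col_diag 𝒯 hn z, Finset.prod_mul_distrib]
      ring
    have st4 : (Lay (fun p : Fin (n+1) × Fin n =>
          if p.1 = act 𝒯 hn p.2 then (if p.2 ∈ Sset 𝒯 then Hm else 1) else 1)).mulVec
        (fun z => W φ (fun j => z (0, j)) * ∏ j,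
            ((if j ∈ Sset 𝒯 then wca (act 𝒯 hn j) (fun i => z (i, j)) else 1) *
             (if j ∈ Sset 𝒯 then g2 (act 𝒯 hn j) (fun i => z (i, j))
              else GA (fun i => z (i, j)))))
        = fun z => W φ (fun j => z (0, j)) * ∏ j, (if j ∈ Sset 𝒯 then
            g4 (act 𝒯 hn j) (fun i => z (i, j)) else GA (fun i => z (i, j))) := by
      rw [stepsite (fun j => act 𝒯 hn j) ha
        (fun j => if j ∈ Sset 𝒯 then Hm else 1)
        (fun j c => (if j ∈ Sset 𝒯 then wca (act 𝒯 hn j) c else 1) *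
          (if j ∈ Sset 𝒯 then g2 (act 𝒯 hn j) c else GA c)) (W φ)]
      funext z
      congr 1
      exact Finset.prod_congr rfl fun j _ => E3' j (fun i => z (i, j))
    have st5 : (CZof (rowGates 𝒯)).mulVec
        (fun z => W φ (fun j => z (0, j)) * ∏ j, (if j ∈ Sset 𝒯 then
            g4 (act 𝒯 hn j) (fun i => z (i, j)) else GA (fun i => z (i, j))))
        = fun z => (fun x => mph 𝒯 x * W φ x) (fun j => z (0, j)) *
            ∏ j, (if j ∈ Sset 𝒯 then g4 (act 𝒯 hn j) (fun i => z (i, j))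
              else GA (fun i => z (i, j))) := by
      rw [czof_mulVec]
      funext z
      exact E8 z
    have st6 : (Lay (fun p : Fin (n+1) × Fin n =>
          if p.1 = act 𝒯 hn p.2 then (if p.2 ∈ Sset 𝒯 then Hm else 1) else 1)).mulVec
        (fun z => (fun x => mph 𝒯 x * W φ x) (fun j => z (0, j)) * ∏ j,
            (if j ∈ Sset 𝒯 then g4 (act 𝒯 hn j) (fun i => z (i, j))
              else GA (fun i => z (i, j))))
        = fun z => (fun x => mph 𝒯 x * W φ x) (fun j => z (0, j)) * ∏ j,
            (if j ∈ Sset 𝒯 then g5 (act 𝒯 hn j) (fun i => z (i, j))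
              else GA (fun i => z (i, j))) := by
      rw [stepsite (fun j => act 𝒯 hn j) ha
        (fun j => if j ∈ Sset 𝒯 then Hm else 1)
        (fun j c => if j ∈ Sset 𝒯 then g4 (act 𝒯 hn j) c else GA c)
        (fun x => mph 𝒯 x * W φ x)]
      funext z
      congr 1
      exact Finset.prod_congr rfl fun j _ => E4' j (fun i => z (i, j))
    have st7 : (CZof (colGates 𝒯 hn)).mulVec
        (fun z => (fun x => mph 𝒯 x * W φ x) (fun j => z (0, j)) * ∏ j,
            (if j ∈ Sset 𝒯 then g5 (act 𝒯 hn j) (fun i => z (i, j))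
              else GA (fun i => z (i, j))))
        = fun z => (fun x => mph 𝒯 x * W φ x) (fun j => z (0, j)) * ∏ j,
            (if j ∈ Sset 𝒯 then g2 (act 𝒯 hn j) (fun i => z (i, j))
              else GA (fun i => z (i, j))) := by
      rw [czof_mulVec]
      funext z
      rw [col_diag 𝒯 hn z]
      rw [show (∏ j, (if j ∈ Sset 𝒯 then g2 (act 𝒯 hn j) (fun i => z (i, j))
              else GA (fun i => z (i, j))))
          = ∏ j, ((if j ∈ Sset 𝒯 then wca (act 𝒯 hn j) (fun i => z (i, j)) else 1) *
            (if j ∈ Sset 𝒯 then g5 (act 𝒯 hn j) (fun i => z (i, j))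
              else GA (fun i => z (i, j)))) from
        (Finset.prod_congr rfl fun j _ => (E5' j (fun i => z (i, j))).symm)]
      rw [Finset.prod_mul_distrib]
      ring
    have st8 : (Lay (fun p : Fin (n+1) × Fin n =>
          if p.1 = act 𝒯 hn p.2 then (if p.2 ∈ Sset 𝒯 then Hm else 1) else 1)).mulVec
        (fun z => (fun x => mph 𝒯 x * W φ x) (fun j => z (0, j)) * ∏ j,
            (if j ∈ Sset 𝒯 then g2 (act 𝒯 hn j) (fun i => z (i, j))
              else GA (fun i => z (i, j))))
        = fun z => (fun x => mph 𝒯 x * W φ x) (fun j => z (0, j)) * ∏ j,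
            (if j ∈ Sset 𝒯 then g1 (act 𝒯 hn j) (fun i => z (i, j))
              else GA (fun i => z (i, j))) := by
      rw [stepsite (fun j => act 𝒯 hn j) ha
        (fun j => if j ∈ Sset 𝒯 then Hm else 1)
        (fun j c => if j ∈ Sset 𝒯 then g2 (act 𝒯 hn j) c else GA c)
        (fun x => mph 𝒯 x * W φ x)]
      funext z
      congr 1
      exact Finset.prod_congr rfl fun j _ => E6' j (fun i => z (i, j))
    have st9 : (Lay (fun p : Fin (n+1) × Fin n =>
          if p.1 = act 𝒯 hn p.2 then (if p.2 ∈ Sset 𝒯 then Xm else 1) else 1)).mulVec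
        (fun z => (fun x => mph 𝒯 x * W φ x) (fun j => z (0, j)) * ∏ j,
            (if j ∈ Sset 𝒯 then g1 (act 𝒯 hn j) (fun i => z (i, j))
              else GA (fun i => z (i, j))))
        = fun z => (fun x => mph 𝒯 x * W φ x) (fun j => z (0, j)) * ∏ j,
            GA (fun i => z (i, j)) := by
      rw [stepsite (fun j => act 𝒯 hn j) ha
        (fun j => if j ∈ Sset 𝒯 then Xm else 1)
        (fun j c => if j ∈ Sset 𝒯 then g1 (act 𝒯 hn j) c else GA c)
        (fun x => mph 𝒯 x * W φ x)]
      funext z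
      congr 1
      exact Finset.prod_congr rfl fun j _ => E7' j (fun i => z (i, j))
    have st10 : (Lay (fun p : Fin (n+1) × Fin n =>
          if p.1 = 0 then uLg p.2 else 1)).mulVec
        (fun z => (fun x => mph 𝒯 x * W φ x) (fun j => z (0, j)) * ∏ j,
            GA (fun i => z (i, j)))
        = fun z => (∑ t : Fin n → Bool, (∏ j, uLg j (z (0, j)) (t j)) *
            (fun x => mph 𝒯 x * W φ x) t) * ∏ j, GA (fun i => z (i, j)) :=
      steptop uLg (fun _ => GA) (fun _ c b => hGA0upd c b) (fun x => mph 𝒯 x * W φ x)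
    rw [embed_eq (W φ), st1, st2, st3, st4, st5, st6, st7, st8, st9, st10,
      embed_eq (fun x => ∑ t, (∏ j, uLg j (x j) (t j)) * (mph 𝒯 t * W φ t))]

set_option maxHeartbeats 1000000 in
lemma sim {n : ℕ} (hn : 1 ≤ n) (d : ℕ)
    (U : Matrix (Fin n → Bool) (Fin n → Bool) ℂ) (hU : IsQAC d U) :
    ∃ V : Matrix (Fin (n+1) × Fin n → Bool) (Fin (n+1) × Fin n → Bool) ℂ,
      Is2DQAC (n+1) n (7*d) V ∧
      ∀ φ : (Fin n → Bool) → ℂ,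
        V.mulVec (embedV n φ) = embedV n (U.mulVec φ) := by
  induction d generalizing U with
  | zero =>
    obtain ⟨u, hu, hUeq⟩ := hU
    refine ⟨Lay (fun p : Fin (n+1) × Fin n => if p.1 = 0 then u p.2 else 1), ?_, ?_⟩
    · show IsQACOn _ (7*0) _
      rw [Nat.mul_zero]
      show IsSingleQubitLayer _
      refine lay_single _ fun p => ?_
      split
      · exact hu _
      · exact one_mem _
    · intro φ
      rw [embed_eq φ, steptop u (fun _ => GA) (fun _ c b => hGA0upd c b) φ,
        embed_eq (U.mulVec φ)]
      funext z
      congr 1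
      simp only [Matrix.mulVec, dotProduct]
      exact Finset.sum_congr rfl fun t _ => by rw [hUeq]
  | succ d ih =>
    obtain ⟨L, M, C', hL, hM, hC', rfl⟩ := hU
    obtain ⟨V', hV'q, hV'act⟩ := ih C' hC'
    obtain ⟨uLg, huL, hLeq⟩ := hL
    obtain ⟨𝒯, -, hdis, hMeq⟩ := hM
    obtain ⟨V, hVq, hVact⟩ := step hn 𝒯 hdis uLg huL (7*d) V' hV'q
      (fun φ => C'.mulVec φ) hV'act
    refine ⟨V, ?_, ?_⟩
    · show IsQACOn _ (7*(d+1)) V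
      have h7 : 7*(d+1) = 7*d+7 := by ring
      rw [h7]
      exact hVq
    · intro φ
      rw [hVact φ]
      have hMdiag : M.mulVec (C'.mulVec φ) = fun x =>
          (∏ T ∈ 𝒯, if ∀ i ∈ T, x i = true then (-1:ℂ) else 1) * C'.mulVec φ x := by
        have hMof : M = Matrix.of fun x y =>
            if x = y then (∏ T ∈ 𝒯, if ∀ i ∈ T, x i = true then (-1:ℂ) else 1) else 0 :=
          Matrix.ext fun x y => (hMeq x y).trans (by
            rw [Matrix.of_apply]
            congr
            funext T
            congr)
        rw [hMof, diag_mulVec]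
      have hLmv : ∀ (v : (Fin n → Bool) → ℂ) (x : Fin n → Bool),
          L.mulVec v x = ∑ t, L x t * v t := fun v x => rfl
      have harg : (fun x => ∑ t : Fin n → Bool,
            (∏ j, uLg j (x j) (t j)) * (mph 𝒯 t * C'.mulVec φ t))
          = (L * M * C').mulVec φ := by
        funext x
        rw [← Matrix.mulVec_mulVec, ← Matrix.mulVec_mulVec, hMdiag, hLmv]
        refine Finset.sum_congr rfl fun t _ => ?_
        rw [hLeq]
        rw [mph]
      rw [harg]

/-- **2D-QAC circuits exactly simulate general QAC circuits.**
Any unitary `U` implemented by a depth-`d` QAC circuit on `n` qubits is exactly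
simulated by a depth-`7d` 2D-QAC circuit `V` on the `(n+1) × n` lattice, whose
first row holds the `n` input qubits and whose remaining `n²` qubits are
ancillas initialized (and restored) to `|1^{n²}⟩`:
`V(|φ⟩ ⊗ |1^{n²}⟩) = (U|φ⟩) ⊗ |1^{n²}⟩` for every `n`-qubit state `|φ⟩`. -/
theorem stmt4 (n d : ℕ) (hn : 1 ≤ n)
    (U : Matrix (Fin n → Bool) (Fin n → Bool) ℂ) (hU : IsQAC d U) :
    ∃ V : Matrix (Fin (n + 1) × Fin n → Bool) (Fin (n + 1) × Fin n → Bool) ℂ,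
      Is2DQAC (n + 1) n (7 * d) V ∧
      ∀ φ : (Fin n → Bool) → ℂ,
        V.mulVec (fun z =>
            if ∀ p : Fin (n + 1) × Fin n, p.1 ≠ 0 → z p = true then
              φ (fun j => z (0, j))
            else 0) =
          fun z =>
            if ∀ p : Fin (n + 1) × Fin n, p.1 ≠ 0 → z p = true then
              U.mulVec φ (fun j => z (0, j))
            else 0 := by
  obtain ⟨V, h1, h2⟩ := sim hn d U hU
  exact ⟨V, h1, fun φ => h2 φ⟩
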